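/- For the two-mode n-photon case, the traceless tangent invariant I_{t'}(ρ) = Σ_{i=1}^{3} tr(ρ H_i)² satisfies 0 ≤ I_{t'}(ρ) ≤ 3n/((n+1)(n+2)) for every n-photon two-mode density matrix ρ, with the maximum attained by ρ = |n,0⟩⟨n,0| and the minimum by the maximally mixed state I(M)/M. -/

import Mathlib

open Matrix
open scoped ComplexOrder

/-- The `n`-photon `m`-mode Fock basis: tuples of occupation numbers summing to `n`. -/
abbrev FockT (m n : ℕ) := {f : Fin m → ℕ // ∑ i, f i = n}

instance (m n : ℕ) : Fintype (FockT m n) :=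
  Fintype.subtype (Finset.Nat.antidiagonalTuple m n) fun _ =>
    Finset.Nat.mem_antidiagonalTuple

/-- Matrix element `⟨B| a_k† a_l |A⟩` on Fock states. -/
noncomputable def ampl {m : ℕ} (A B : Fin m → ℕ) (k l : Fin m) : ℝ :=
  if 1 ≤ A l ∧ B = Function.update (Function.update A l (A l - 1)) k
      ((Function.update A l (A l - 1)) k + 1)
  then Real.sqrt (A l) * Real.sqrt ((Function.update A l (A l - 1)) k + 1) else 0

/-- The Jordan–Schwinger image `Σ_{k,l} h_{kl} a_k† a_l` on the `n`-photon sector. -/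
noncomputable def JS {m : ℕ} (n : ℕ) (h : Matrix (Fin m) (Fin m) ℂ) :
    Matrix (FockT m n) (FockT m n) ℂ :=
  Matrix.of fun B A => ∑ k, ∑ l, h k l * (ampl A.1 B.1 k l : ℝ)

/-- The two-mode generators `(n̂_1-n̂_2)/√2`, `(a_1†a_2+a_2†a_1)/√2`,
`i(a_1†a_2-a_2†a_1)/√2` (normalized Pauli matrices). -/
noncomputable def pauli2 : Fin 3 → Matrix (Fin 2) (Fin 2) ℂ
  | 0 => ((Real.sqrt 2)⁻¹ : ℂ) • Matrix.diagonal ![1, -1]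
  | 1 => ((Real.sqrt 2)⁻¹ : ℂ) • (single 0 1 1 + single 1 0 1)
  | 2 => (Complex.I * ((Real.sqrt 2)⁻¹ : ℂ)) •
      (single 0 1 1 - single 1 0 1)

/-- The traceless tangent basis `H_1, H_2, H_3` for two modes and `n` photons:
the Fock representations of the normalized Paulis divided by `√(binom (n+2) 3)`. -/
noncomputable def Htan2 (n : ℕ) (i : Fin 3) :
    Matrix (FockT 2 n) (FockT 2 n) ℂ :=
  (((Real.sqrt ((n + 2).choose 3))⁻¹ : ℝ) : ℂ) • JS n (pauli2 i)

/-- The traceless tangent invariant `I_{t'}(ρ) = Σ_{i=1}^{3} tr(ρ H_i)²`. -/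
noncomputable def Itp2 (n : ℕ) (ρ : Matrix (FockT 2 n) (FockT 2 n) ℂ) : ℝ :=
  ∑ i : Fin 3, (((ρ * Htan2 n i).trace).re) ^ 2


namespace Stmt16Aux

lemma fin2cases (k : Fin 2) : k = 0 ∨ k = 1 := by omega

lemma update_fact (D E : Fin 2 → ℕ) (k l : Fin 2) (hD : 1 ≤ D l) (hE : 1 ≤ E k) :
    (Function.update E k (E k - 1) = Function.update D l (D l - 1)) ↔
    (E = Function.update (Function.update D l (D l - 1)) k
        ((Function.update D l (D l - 1)) k + 1)) := by
  simp only [funext_iff, Fin.forall_fin_two, Function.update_apply]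
  rcases fin2cases k with rfl | rfl <;> rcases fin2cases l with rfl | rfl <;>
    simp <;> omega

lemma low_sum {n : ℕ} {D : Fin 2 → ℕ} {j : Fin 2} (h : 1 ≤ D j) (hs : D 0 + D 1 = n) :
    ∑ i, Function.update D j (D j - 1) i = n - 1 := by
  rw [Fin.sum_univ_two, Function.update_apply, Function.update_apply]
  rcases fin2cases j with rfl | rfl <;> simp <;> omega

variable {n : ℕ}

lemma fsum (A : FockT 2 n) : A.1 0 + A.1 1 = n := by
  have := A.2; rwa [Fin.sum_univ_two] at this

/-- annihilation operator matrix -/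
noncomputable def ann (n : ℕ) (l : Fin 2) : Matrix (FockT 2 (n-1)) (FockT 2 n) ℂ :=
  Matrix.of fun C A =>
    if 1 ≤ A.1 l ∧ C.1 = Function.update A.1 l (A.1 l - 1) then ((Real.sqrt (A.1 l) : ℝ) : ℂ) else 0

lemma ann_apply (l : Fin 2) (C : FockT 2 (n-1)) (A : FockT 2 n) :
    ann n l C A = if 1 ≤ A.1 l ∧ C.1 = Function.update A.1 l (A.1 l - 1)
      then ((Real.sqrt (A.1 l) : ℝ) : ℂ) else 0 := rfl

lemma ann_factor (k l : Fin 2) (B A : FockT 2 n) :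
    ((ann n k)ᴴ * ann n l) B A = ((ampl A.1 B.1 k l : ℝ) : ℂ) := by
  rw [Matrix.mul_apply, ampl]
  by_cases hA : 1 ≤ A.1 l
  swap
  · rw [if_neg (fun hc : 1 ≤ A.1 l ∧ _ => hA hc.1)]
    push_cast
    apply Finset.sum_eq_zero
    intro C _
    have hno : ¬(1 ≤ A.1 l ∧ C.1 = Function.update A.1 l (A.1 l - 1)) := fun hc => hA hc.1
    rw [Matrix.conjTranspose_apply, ann_apply, ann_apply, if_neg hno, mul_zero]
  by_cases hB : 1 ≤ B.1 k
  swap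
  · rw [if_neg]
    swap
    · rintro ⟨h1, h2⟩
      apply hB
      rw [h2, Function.update_self]
      omega
    push_cast
    apply Finset.sum_eq_zero
    intro C _
    have hno : ¬(1 ≤ B.1 k ∧ C.1 = Function.update B.1 k (B.1 k - 1)) := fun hc => hB hc.1
    rw [Matrix.conjTranspose_apply, ann_apply, ann_apply, if_neg hno, star_zero, zero_mul]
  · -- main case
    have hCB : ∑ i, Function.update B.1 k (B.1 k - 1) i = n - 1 := low_sum hB (fsum B)
    rw [Finset.sum_eq_single (⟨Function.update B.1 k (B.1 k - 1), hCB⟩ : FockT 2 (n-1))]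
    · rw [Matrix.conjTranspose_apply, ann_apply, ann_apply]
      have hc1 : 1 ≤ B.1 k ∧
          (⟨Function.update B.1 k (B.1 k - 1), hCB⟩ : FockT 2 (n-1)).1 =
            Function.update B.1 k (B.1 k - 1) := ⟨hB, rfl⟩
      rw [if_pos hc1]
      by_cases hcond : B.1 = Function.update (Function.update A.1 l (A.1 l - 1)) k
          ((Function.update A.1 l (A.1 l - 1)) k + 1)
      · have hupd : Function.update B.1 k (B.1 k - 1) = Function.update A.1 l (A.1 l - 1) :=
          (update_fact A.1 B.1 k l hA hB).mpr hcond
        have hBk : B.1 k = (Function.update A.1 l (A.1 l - 1)) k + 1 := by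
          conv_lhs => rw [hcond, Function.update_self]
        have hc2 : 1 ≤ A.1 l ∧
            (⟨Function.update B.1 k (B.1 k - 1), hCB⟩ : FockT 2 (n-1)).1 =
              Function.update A.1 l (A.1 l - 1) := ⟨hA, hupd⟩
        rw [if_pos hc2, if_pos (⟨hA, hcond⟩ : 1 ≤ A.1 l ∧ _), hBk]
        rw [RCLike.star_def, Complex.conj_ofReal]
        push_cast
        ring
      · have hno2 : ¬(1 ≤ A.1 l ∧
            (⟨Function.update B.1 k (B.1 k - 1), hCB⟩ : FockT 2 (n-1)).1 =
              Function.update A.1 l (A.1 l - 1)) :=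
          fun hc => hcond ((update_fact A.1 B.1 k l hA hB).mp hc.2)
        have hno3 : ¬(1 ≤ A.1 l ∧ B.1 = Function.update (Function.update A.1 l (A.1 l - 1)) k
            ((Function.update A.1 l (A.1 l - 1)) k + 1)) := fun hc => hcond hc.2
        rw [if_neg hno2, if_neg hno3, mul_zero]
        norm_num
    · intro C _ hC
      rw [Matrix.conjTranspose_apply, ann_apply, ann_apply]
      by_cases h2 : 1 ≤ B.1 k ∧ C.1 = Function.update B.1 k (B.1 k - 1)
      · exact absurd (Subtype.ext h2.2) hC
      · rw [if_neg h2, star_zero, zero_mul]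
    · intro h
      exact absurd (Finset.mem_univ _) h


lemma ampl_diag (A B : FockT 2 n) (k : Fin 2) :
    (ampl A.1 B.1 k k : ℝ) = if B = A then (A.1 k : ℝ) else 0 := by
  rw [ampl]
  by_cases hk : 1 ≤ A.1 k
  · have hupd : Function.update (Function.update A.1 k (A.1 k - 1)) k
        ((Function.update A.1 k (A.1 k - 1)) k + 1) = A.1 := by
      funext i
      simp only [Function.update_apply]
      split_ifs with h
      · subst h; omega
      · rfl
    rw [hupd]
    have harg : ((Function.update A.1 k (A.1 k - 1)) k + 1 : ℕ) = A.1 k := by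
      rw [Function.update_self]; omega
    have harg' : ((Function.update A.1 k (A.1 k - 1)) k + 1 : ℝ) = (A.1 k : ℝ) := by
      exact_mod_cast congrArg (Nat.cast : ℕ → ℝ) harg
    by_cases hBA : B = A
    · subst hBA
      rw [if_pos ⟨hk, rfl⟩, if_pos rfl, harg', Real.mul_self_sqrt (by positivity)]
    · rw [if_neg (fun hc => hBA (Subtype.ext hc.2)), if_neg hBA]
  · have hk0 : A.1 k = 0 := by omega
    rw [if_neg (fun hc => hk hc.1)]
    split_ifs <;> simp [hk0]

lemma ann_sum : (ann n 0)ᴴ * ann n 0 + (ann n 1)ᴴ * ann n 1 = (n : ℂ) • 1 := by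
  ext B A
  rw [Matrix.add_apply, ann_factor, ann_factor, ampl_diag, ampl_diag,
    Matrix.smul_apply, Matrix.one_apply]
  by_cases hBA : B = A
  · subst hBA
    rw [if_pos rfl, if_pos rfl, if_pos rfl, smul_eq_mul, mul_one]
    exact_mod_cast fsum B
  · rw [if_neg hBA, if_neg hBA, if_neg hBA]
    norm_num

/-- one-body reduced density matrix (transposed convention) -/
noncomputable def Rm (n : ℕ) (ρ : Matrix (FockT 2 n) (FockT 2 n) ℂ) :
    Matrix (Fin 2) (Fin 2) ℂ :=
  Matrix.of fun k l => (ρ * ((ann n l)ᴴ * ann n k)).trace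

lemma JS_eq (h : Matrix (Fin 2) (Fin 2) ℂ) :
    JS n h = ∑ k, ∑ l, h k l • ((ann n k)ᴴ * ann n l) := by
  ext B A
  simp only [JS, Matrix.of_apply, Matrix.sum_apply, Matrix.smul_apply, smul_eq_mul]
  refine Finset.sum_congr rfl fun k _ => Finset.sum_congr rfl fun l _ => ?_
  rw [ann_factor]

lemma trace_rho_JS (ρ : Matrix (FockT 2 n) (FockT 2 n) ℂ) (h : Matrix (Fin 2) (Fin 2) ℂ) :
    (ρ * JS n h).trace = ∑ k, ∑ l, h k l * Rm n ρ l k := by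
  rw [JS_eq]
  simp only [Matrix.mul_sum, Matrix.trace_sum, Matrix.mul_smul, Matrix.trace_smul,
    smul_eq_mul, Rm, Matrix.of_apply]


lemma psd_trace_nonneg {ι : Type} [Fintype ι] [DecidableEq ι] {M : Matrix ι ι ℂ}
    (hM : M.PosSemidef) : 0 ≤ M.trace := by
  rw [Matrix.trace]
  apply Finset.sum_nonneg
  intro i _
  have h := hM.dotProduct_mulVec_nonneg (Pi.single i 1)
  rw [← Pi.single_star, star_one] at h
  simpa [Matrix.mulVec_single, single_dotProduct, Matrix.diag] using h

lemma Rm_psd (ρ : Matrix (FockT 2 n) (FockT 2 n) ℂ) (hρ : ρ.PosSemidef) :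
    (Rm n ρ).PosSemidef := by
  refine Matrix.PosSemidef.of_dotProduct_mulVec_nonneg ?_ ?_
  · ext i j
    rw [Matrix.conjTranspose_apply]
    show star (Rm n ρ j i) = Rm n ρ i j
    rw [Rm, Matrix.of_apply, Matrix.of_apply, ← Matrix.trace_conjTranspose,
      Matrix.conjTranspose_mul, Matrix.conjTranspose_mul,
      Matrix.conjTranspose_conjTranspose, hρ.1.eq]
    rw [Matrix.trace_mul_cycle, Matrix.mul_assoc]
  · intro x
    set A : Matrix (FockT 2 (n-1)) (FockT 2 n) ℂ :=
      (star (x 0)) • ann n 0 + (star (x 1)) • ann n 1 with hA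
    have h2 : star x ⬝ᵥ Rm n ρ *ᵥ x = (ρ * (Aᴴ * A)).trace := by
      simp only [hA, Matrix.conjTranspose_add, Matrix.conjTranspose_smul, star_star,
        Matrix.mul_add, Matrix.add_mul, Matrix.smul_mul, Matrix.mul_smul,
        Matrix.trace_add, Matrix.trace_smul, smul_smul, smul_eq_mul,
        dotProduct, Matrix.mulVec, Rm, Matrix.of_apply, Pi.star_apply, Fin.sum_univ_two]
      ring
    have h3 : (ρ * (Aᴴ * A)).trace = (A * ρ * Aᴴ).trace := by
      rw [Matrix.trace_mul_comm, ← Matrix.trace_mul_cycle]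
    rw [h2, h3]
    exact psd_trace_nonneg (hρ.mul_mul_conjTranspose_same _)


lemma Rm_trace (ρ : Matrix (FockT 2 n) (FockT 2 n) ℂ) (htr : ρ.trace = 1) :
    Rm n ρ 0 0 + Rm n ρ 1 1 = (n : ℂ) := by
  show (ρ * ((ann n 0)ᴴ * ann n 0)).trace + (ρ * ((ann n 1)ᴴ * ann n 1)).trace = (n : ℂ)
  rw [← Matrix.trace_add, ← Matrix.mul_add, ann_sum, Matrix.mul_smul, Matrix.mul_one,
    Matrix.trace_smul, htr, smul_eq_mul, mul_one]

lemma psd_diag_nonneg {ι : Type} [Fintype ι] [DecidableEq ι] {M : Matrix ι ι ℂ}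
    (hM : M.PosSemidef) (i : ι) : 0 ≤ M i i := by
  have h := hM.dotProduct_mulVec_nonneg (Pi.single i 1)
  rw [← Pi.single_star, star_one] at h
  simpa [Matrix.mulVec_single, single_dotProduct] using h

lemma two_psd_key {R : Matrix (Fin 2) (Fin 2) ℂ} (hR : R.PosSemidef) :
    Complex.normSq (R 0 1) ≤ (R 0 0).re * (R 1 1).re := by
  have hz : R 1 0 = (starRingEnd ℂ) (R 0 1) := (hR.1.apply 1 0).symm
  have ha := Complex.nonneg_iff.mp (psd_diag_nonneg hR 0)
  have hb := Complex.nonneg_iff.mp (psd_diag_nonneg hR 1)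
  have key : ∀ t : ℝ, (0:ℝ) ≤ t^2 * Complex.normSq (R 0 1) * (R 0 0).re
      + 2*t*Complex.normSq (R 0 1) + (R 1 1).re := by
    intro t
    have hq := (Complex.nonneg_iff.mp (hR.dotProduct_mulVec_nonneg ![(t:ℂ) * R 0 1, 1])).1
    simp only [dotProduct, Matrix.mulVec, Fin.sum_univ_two, Matrix.cons_val_zero,
      Matrix.cons_val_one, Matrix.head_cons, Pi.star_apply, hz, RCLike.star_def,
      _root_.map_mul, Complex.conj_ofReal, star_one, Complex.add_re, Complex.mul_re,
      Complex.conj_re, Complex.conj_im, Complex.ofReal_re, Complex.ofReal_im,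
      Complex.one_re, Complex.one_im, Complex.add_im, Complex.mul_im] at hq
    rw [Complex.normSq_apply]
    nlinarith [hq, ha.2, hb.2]
  set a := (R 0 0).re
  set b := (R 1 1).re
  set s := Complex.normSq (R 0 1)
  have hs : 0 ≤ s := Complex.normSq_nonneg _
  by_cases hs0 : s = 0
  · rw [hs0]
    exact mul_nonneg ha.1 hb.1
  · have hspos : 0 < s := lt_of_le_of_ne hs (Ne.symm hs0)
    by_cases ha0 : a = 0
    · exfalso
      have hk := key (-(b+1)/(2*s))
      rw [ha0] at hk
      have h4 : 2 * (-(b+1)/(2*s)) * s = -(b+1) := by field_simp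
      rw [h4] at hk
      nlinarith [hk]
    · have hapos : 0 < a := lt_of_le_of_ne ha.1 (Ne.symm ha0)
      have hk := key (-1/a)
      have h1 : (-1/a)^2 * s * a = s / a := by
        field_simp
      have h2 : 2 * (-1/a) * s = -(2*(s/a)) := by field_simp
      rw [h1, h2] at hk
      have h3 : s / a ≤ b := by linarith
      calc s = (s/a) * a := by field_simp
      _ ≤ b * a := mul_le_mul_of_nonneg_right h3 ha.1
      _ = a * b := mul_comm _ _


lemma ampl_offdiag (A : FockT 2 n) {k l : Fin 2} (hkl : k ≠ l) :
    ampl A.1 A.1 k l = 0 := by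
  rw [ampl, if_neg]
  rintro ⟨h1, h2⟩
  have h3 := congrFun h2 l
  rw [Function.update_apply, if_neg (fun h => hkl h.symm), Function.update_self] at h3
  omega

lemma JS_diag (h : Matrix (Fin 2) (Fin 2) ℂ) (A : FockT 2 n) :
    JS n h A A = h 0 0 * (A.1 0 : ℝ) + h 1 1 * (A.1 1 : ℝ) := by
  show (∑ k, ∑ l, h k l * (ampl A.1 A.1 k l : ℝ)) = _
  rw [Fin.sum_univ_two, Fin.sum_univ_two, Fin.sum_univ_two,
    show ampl A.1 A.1 0 1 = 0 from ampl_offdiag A (by decide),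
    show ampl A.1 A.1 1 0 = 0 from ampl_offdiag A (by decide)]
  have h00 := ampl_diag A A 0
  have h11 := ampl_diag A A 1
  rw [if_pos rfl] at h00 h11
  rw [h00, h11]
  push_cast
  ring

lemma trace_pauli (ρ : Matrix (FockT 2 n) (FockT 2 n) ℂ) :
    (ρ * JS n (pauli2 0)).trace
      = ((Real.sqrt 2)⁻¹ : ℂ) * (Rm n ρ 0 0 - Rm n ρ 1 1) ∧
    (ρ * JS n (pauli2 1)).trace
      = ((Real.sqrt 2)⁻¹ : ℂ) * (Rm n ρ 1 0 + Rm n ρ 0 1) ∧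
    (ρ * JS n (pauli2 2)).trace
      = Complex.I * ((Real.sqrt 2)⁻¹ : ℂ) * (Rm n ρ 1 0 - Rm n ρ 0 1) := by
  refine ⟨?_, ?_, ?_⟩ <;>
  · rw [trace_rho_JS]
    simp [pauli2, Fin.sum_univ_two, Matrix.smul_apply, Matrix.diagonal_apply,
      Matrix.single, Matrix.of_apply, Matrix.add_apply, Matrix.sub_apply]
    ring


lemma choose2 (n : ℕ) : 2 * ((n+1).choose 2) = (n+1) * n := by
  induction n with
  | zero => rfl
  | succ m ih =>
    rw [show m+1+1 = (m+1)+1 from rfl, Nat.choose_succ_succ, Nat.mul_add, ih,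
      Nat.choose_one_right]
    ring

lemma choose3 (n : ℕ) : 6 * ((n+2).choose 3) = n * (n+1) * (n+2) := by
  induction n with
  | zero => rfl
  | succ m ih =>
    have h : (m+3).choose 3 = (m+2).choose 2 + (m+2).choose 3 := Nat.choose_succ_succ _ _
    calc 6 * ((m+1+2).choose 3) = 3*(2*((m+2).choose 2)) + 6*((m+2).choose 3) := by
          rw [show m+1+2 = m+3 from rfl, h]; ring
      _ = 3*((m+2)*(m+1)) + m*(m+1)*(m+2) := by rw [choose2 (m+1), ih]
      _ = (m+1)*(m+1+1)*(m+1+2) := by ring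

lemma trace_std (M : Matrix (FockT 2 n) (FockT 2 n) ℂ) (v : FockT 2 n) :
    (Matrix.single v v 1 * M).trace = M v v := by
  rw [Matrix.trace]
  simp [Matrix.diag, Matrix.mul_apply, Matrix.single, Matrix.of_apply,
    ite_and, Finset.sum_ite_eq]

def swapE : FockT 2 n ≃ FockT 2 n where
  toFun A := ⟨![A.1 1, A.1 0], by
    rw [Fin.sum_univ_two]
    have := fsum A
    simp only [Matrix.cons_val_zero, Matrix.cons_val_one, Matrix.head_cons]
    omega⟩
  invFun A := ⟨![A.1 1, A.1 0], by
    rw [Fin.sum_univ_two]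
    have := fsum A
    simp only [Matrix.cons_val_zero, Matrix.cons_val_one, Matrix.head_cons]
    omega⟩
  left_inv A := Subtype.ext (by
    funext i
    rcases fin2cases i with rfl | rfl <;> simp)
  right_inv A := Subtype.ext (by
    funext i
    rcases fin2cases i with rfl | rfl <;> simp)

lemma sum_swap : (∑ A : FockT 2 n, ((A.1 0 : ℕ) : ℂ)) = ∑ A : FockT 2 n, ((A.1 1 : ℕ) : ℂ) := by
  refine Fintype.sum_equiv swapE _ _ fun A => ?_
  simp [swapE]

lemma trace_JS (h : Matrix (Fin 2) (Fin 2) ℂ) :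
    (JS n h).trace = (h 0 0 + h 1 1) * ∑ A : FockT 2 n, ((A.1 0 : ℕ) : ℂ) := by
  rw [Matrix.trace]
  unfold Matrix.diag
  calc (∑ A : FockT 2 n, JS n h A A)
      = ∑ A : FockT 2 n, (h 0 0 * ((A.1 0 : ℕ) : ℂ) + h 1 1 * ((A.1 1 : ℕ) : ℂ)) := by
        refine Finset.sum_congr rfl fun A _ => ?_
        rw [JS_diag]
        norm_num
    _ = h 0 0 * (∑ A : FockT 2 n, ((A.1 0 : ℕ) : ℂ))
        + h 1 1 * (∑ A : FockT 2 n, ((A.1 1 : ℕ) : ℂ)) := by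
        rw [Finset.sum_add_distrib, Finset.mul_sum, Finset.mul_sum]
    _ = _ := by rw [← sum_swap]; ring


lemma pentries : pauli2 0 0 0 = ((Real.sqrt 2)⁻¹:ℂ) ∧ pauli2 0 1 1 = -((Real.sqrt 2)⁻¹:ℂ) ∧
    pauli2 1 0 0 = 0 ∧ pauli2 1 1 1 = 0 ∧ pauli2 2 0 0 = 0 ∧ pauli2 2 1 1 = 0 := by
  refine ⟨?_,?_,?_,?_,?_,?_⟩ <;>
    simp [pauli2, Matrix.single, Matrix.diagonal_apply, Matrix.smul_apply,
      Matrix.add_apply, Matrix.sub_apply, Matrix.of_apply]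

lemma eqbound (hn : n ≠ 0) :
    ((Real.sqrt ((n + 2).choose 3))⁻¹)^2 * (((Real.sqrt 2)⁻¹)^2 * (n:ℝ)^2)
      = 3 * n / ((n+1) * (n+2)) := by
  have hC : (0:ℝ) < ((n+2).choose 3 : ℕ) := by
    exact_mod_cast Nat.choose_pos (by omega)
  have hch : (((n+2).choose 3 : ℕ) : ℝ) * 6 = n * (n+1) * (n+2) := by
    exact_mod_cast (mul_comm 6 ((n+2).choose 3) ▸ choose3 n)
  rw [← Real.sqrt_inv, Real.sq_sqrt (by positivity), ← Real.sqrt_inv,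
    Real.sq_sqrt (by norm_num)]
  have h1 : ((n:ℝ)+1) * ((n:ℝ)+2) ≠ 0 := by positivity
  have h2 : (((n+2).choose 3 : ℕ) : ℝ) ≠ 0 := ne_of_gt hC
  field_simp
  linear_combination (-1:ℝ) * hch


lemma Itp2_zero_n (ρ : Matrix (FockT 2 0) (FockT 2 0) ℂ) : Itp2 0 ρ = 0 := by
  have h : ∀ i, Htan2 0 i = 0 := by
    intro i
    have h23 : (0+2).choose 3 = 0 := by decide
    rw [Htan2, h23]
    norm_num
  simp [Itp2, h]

lemma part1 (hn : n ≠ 0) (ρ : Matrix (FockT 2 n) (FockT 2 n) ℂ)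
    (hρ : ρ.PosSemidef) (htr : ρ.trace = 1) :
    Itp2 n ρ ≤ 3 * n / ((n + 1) * (n + 2)) := by
  have hR := Rm_psd ρ hρ
  have hz : Rm n ρ 1 0 = (starRingEnd ℂ) (Rm n ρ 0 1) := (hR.1.apply 1 0).symm
  have him0 : (Rm n ρ 0 0).im = 0 := (Complex.nonneg_iff.mp (psd_diag_nonneg hR 0)).2.symm
  have him1 : (Rm n ρ 1 1).im = 0 := (Complex.nonneg_iff.mp (psd_diag_nonneg hR 1)).2.symm
  have ha : 0 ≤ (Rm n ρ 0 0).re := (Complex.nonneg_iff.mp (psd_diag_nonneg hR 0)).1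
  have hb : 0 ≤ (Rm n ρ 1 1).re := (Complex.nonneg_iff.mp (psd_diag_nonneg hR 1)).1
  have hab : (Rm n ρ 0 0).re + (Rm n ρ 1 1).re = n := by
    have h := congrArg Complex.re (Rm_trace ρ htr)
    simpa using h
  have hdet := two_psd_key hR
  rw [Complex.normSq_apply] at hdet
  have e : ∀ i, (ρ * Htan2 n i).trace
      = (((Real.sqrt ((n + 2).choose 3))⁻¹ : ℝ) : ℂ) * (ρ * JS n (pauli2 i)).trace := by
    intro i
    rw [Htan2, Matrix.mul_smul, Matrix.trace_smul, smul_eq_mul]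
  obtain ⟨T0, T1, T2⟩ := trace_pauli ρ
  rw [Itp2, Fin.sum_univ_three, e 0, e 1, e 2, T0, T1, T2, ← eqbound hn]
  set c : ℝ := (Real.sqrt ((n + 2).choose 3))⁻¹ with hc
  simp only [hz, ← Complex.ofReal_inv, Complex.re_ofReal_mul, Complex.mul_re, Complex.mul_im,
    Complex.add_re, Complex.add_im, Complex.sub_re, Complex.sub_im,
    Complex.I_re, Complex.I_im, Complex.ofReal_re, Complex.ofReal_im,
    Complex.conj_re, Complex.conj_im, him0, him1]
  have h4 : 0 ≤ (Rm n ρ 0 0).re * (Rm n ρ 1 1).re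
      - ((Rm n ρ 0 1).re^2 + (Rm n ρ 0 1).im^2) := by nlinarith [hdet]
  have hkey : c^2*((Real.sqrt 2)⁻¹)^2*((n:ℝ))^2
      = c^2*((Real.sqrt 2)⁻¹)^2*((Rm n ρ 0 0).re + (Rm n ρ 1 1).re)^2 := by
    rw [← hab]
  nlinarith [hkey, mul_nonneg (sq_nonneg (c*(Real.sqrt 2)⁻¹)) h4,
    sq_nonneg (c*(Real.sqrt 2)⁻¹), sq_nonneg ((Rm n ρ 0 0).re - (Rm n ρ 1 1).re)]


lemma part2 (hv : ∑ i, (fun i : Fin 2 => if i = 0 then n else 0) i = n) :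
    Itp2 n (Matrix.single
        (⟨fun i => if i = 0 then n else 0, hv⟩ : FockT 2 n)
        (⟨fun i => if i = 0 then n else 0, hv⟩ : FockT 2 n) 1)
      = 3 * n / ((n + 1) * (n + 2)) := by
  by_cases hn : n = 0
  · subst hn
    rw [Itp2_zero_n]
    norm_num
  · set v : FockT 2 n := ⟨fun i => if i = 0 then n else 0, hv⟩ with hvdef
    have hv0 : v.1 0 = n := rfl
    have hv1 : v.1 1 = 0 := rfl
    have e : ∀ i, (Matrix.single v v 1 * Htan2 n i).trace
        = (((Real.sqrt ((n + 2).choose 3))⁻¹ : ℝ) : ℂ) * JS n (pauli2 i) v v := by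
      intro i
      rw [Htan2, Matrix.mul_smul, Matrix.trace_smul, smul_eq_mul, trace_std]
    rw [Itp2, Fin.sum_univ_three, e 0, e 1, e 2, JS_diag, JS_diag, JS_diag, hv0, hv1]
    obtain ⟨p1,p2,p3,p4,p5,p6⟩ := pentries
    rw [p1,p2,p3,p4,p5,p6, ← eqbound hn]
    simp only [← Complex.ofReal_inv, Complex.re_ofReal_mul, Complex.mul_re, Complex.mul_im,
      Complex.add_re, Complex.add_im, Complex.ofReal_re, Complex.ofReal_im,
      Complex.natCast_re, Complex.natCast_im, Nat.cast_zero, Nat.cast_ofNat,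
      Complex.zero_re, Complex.zero_im, Complex.neg_re, Complex.neg_im]
    ring

lemma part3 : Itp2 n (((Fintype.card (FockT 2 n) : ℂ))⁻¹ • 1) = 0 := by
  have h0 : ∀ i, ((((Fintype.card (FockT 2 n) : ℂ))⁻¹ •
      (1 : Matrix (FockT 2 n) (FockT 2 n) ℂ)) * Htan2 n i).trace = 0 := by
    intro i
    rw [Matrix.smul_mul, Matrix.one_mul, Htan2, Matrix.trace_smul, Matrix.trace_smul, trace_JS]
    obtain ⟨p1,p2,p3,p4,p5,p6⟩ := pentries
    rcases (by omega : i = 0 ∨ i = 1 ∨ i = 2) with rfl | rfl | rfl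
    · rw [p1, p2]; ring_nf
    · rw [p3, p4]; ring_nf
    · rw [p5, p6]; ring_nf
  rw [Itp2, Fin.sum_univ_three, h0 0, h0 1, h0 2]
  norm_num

end Stmt16Aux

/-- For two modes and `n` photons, `0 ≤ I_{t'}(ρ) ≤ 3n/((n+1)(n+2))` for every
density matrix `ρ`, with the maximum attained at `|n,0⟩⟨n,0|` and the minimum at
the maximally mixed state `I(M)/M`. -/
theorem stmt16 (n : ℕ) :
    (∀ ρ : Matrix (FockT 2 n) (FockT 2 n) ℂ, ρ.PosSemidef → ρ.trace = 1 →
      0 ≤ Itp2 n ρ ∧ Itp2 n ρ ≤ 3 * n / ((n + 1) * (n + 2))) ∧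
    Itp2 n (Matrix.single
        (⟨fun i => if i = 0 then n else 0, by simp⟩ : FockT 2 n)
        (⟨fun i => if i = 0 then n else 0, by simp⟩ : FockT 2 n) 1) =
      3 * n / ((n + 1) * (n + 2)) ∧
    Itp2 n (((Fintype.card (FockT 2 n) : ℂ))⁻¹ • 1) = 0 := by
  refine ⟨fun ρ hρ htr => ⟨?_, ?_⟩, ?_, ?_⟩
  · rw [Itp2]
    positivity
  · by_cases hn : n = 0
    · subst hn
      rw [Stmt16Aux.Itp2_zero_n]
      norm_num
    · exact Stmt16Aux.part1 hn ρ hρ htr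
  · exact Stmt16Aux.part2 _
  · exact Stmt16Aux.part3
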